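/- Let A be a self-adjoint endomorphism of a finite-dimensional real inner product space satisfying A² = trace(A)·A and A ≠ 0. Then A has rank one, i.e. A = λP where λ = trace(A) ≠ 0 and P is an orthogonal projection onto a one-dimensional subspace. -/

import Mathlib

open Module RealInnerProductSpace

theorem stmt_4 {V : Type*} [NormedAddCommGroup V] [InnerProductSpace ℝ V]
    [FiniteDimensional ℝ V] (A : V →ₗ[ℝ] V) (hA : A.IsSymmetric)
    (hsq : A ∘ₗ A = LinearMap.trace ℝ V A • A) (hA0 : A ≠ 0) :
    finrank ℝ (LinearMap.range A) = 1 ∧ LinearMap.trace ℝ V A ≠ 0 ∧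
      ∃ P : V →ₗ[ℝ] V, P ∘ₗ P = P ∧ P.IsSymmetric ∧
        finrank ℝ (LinearMap.range P) = 1 ∧ A = LinearMap.trace ℝ V A • P := by
  set t := LinearMap.trace ℝ V A with ht
  have htne : t ≠ 0 := by
    intro h
    apply hA0
    have hsq0 : A ∘ₗ A = 0 := by rw [hsq, h, zero_smul]
    ext x
    have : (inner ℝ (A x) (A x) : ℝ) = 0 := by
      have h2 := hA x (A x)
      rw [h2]
      have : A (A x) = 0 := by
        have := congrFun (congrArg DFunLike.coe hsq0) x
        simpa using this
      simp [this]
    simpa using inner_self_eq_zero.mp this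
  set P : V →ₗ[ℝ] V := t⁻¹ • A with hP
  have hAP : A = t • P := by
    rw [hP, smul_smul, mul_inv_cancel₀ htne, one_smul]
  have hPP : P ∘ₗ P = P := by
    ext x
    simp only [hP, LinearMap.comp_apply, LinearMap.smul_apply, map_smul]
    rw [← LinearMap.comp_apply, hsq, LinearMap.smul_apply]
    match_scalars
    field_simp
  have hPsym : P.IsSymmetric := by
    intro x y
    simp only [hP, LinearMap.smul_apply, inner_smul_left, inner_smul_right,
      RCLike.conj_to_real]
    rw [hA x y]
  have hrangeAP : LinearMap.range A = LinearMap.range P := by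
    apply le_antisymm
    · rintro _ ⟨x, rfl⟩; exact ⟨t • x, by simp [hAP]⟩
    · rintro _ ⟨x, rfl⟩; exact ⟨t⁻¹ • x, by simp [hP]⟩
  obtain ⟨p, hp⟩ := (LinearMap.isProj_iff_isIdempotentElem P).mpr hPP
  have hrange : LinearMap.range P = p := by
    apply le_antisymm
    · rintro _ ⟨x, rfl⟩; exact hp.map_mem x
    · intro x hx; exact ⟨x, hp.map_id x hx⟩
  have htrP : LinearMap.trace ℝ V P = 1 := by
    simp only [hP, map_smul, smul_eq_mul, ← ht]
    exact inv_mul_cancel₀ htne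
  have hfr : finrank ℝ p = 1 := by
    have := hp.trace
    rw [htrP] at this
    exact_mod_cast this.symm
  have hfrP : finrank ℝ (LinearMap.range P) = 1 := by rw [hrange]; exact hfr
  exact ⟨by rw [hrangeAP]; exact hfrP, htne, P, hPP, hPsym, hfrP, hAP⟩
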